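/- (Lemma 1.) Let N ≥ 1, let O = P_{a₀} be a non-identity Pauli string on (Fin N → Fin 2), and let π : Equiv.Perm (Fin 4). Then: (i) tr(Λ⁺ * T_π) = D^(#(π) − 2·δ(π)); (ii) tr(O^{⊗4} * Λ⁺ * T_π) = D^(#(π) − 2·δ(π)); and (iii) tr(O^{⊗4} * Λ⁻ * T_π) = −δ(π) · D^(#(π) − 2), where the right-hand side of (iii) is 0 when δ(π) = 0 (note #(π) ≥ 2 whenever δ(π) = 1, so all exponents are natural numbers). -/
import Mathlib


open Matrix Kronecker
open scoped Classical

noncomputable section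

/-- Single-qubit Pauli matrices. -/
def pauli : Fin 4 → Matrix (Fin 2) (Fin 2) ℂ :=
  ![1, !![0, 1; 1, 0], !![0, -Complex.I; Complex.I, 0], !![1, 0; 0, -1]]

/-- Pauli string on `N` qubits with label `a`. -/
def PauliString {N : ℕ} (a : Fin N → Fin 4) :
    Matrix (Fin N → Fin 2) (Fin N → Fin 2) ℂ :=
  fun f g => ∏ k, pauli (a k) (f k) (g k)

/-- Reduced Choi state: partial trace over the doubled-B factor of the
normalized Choi state of `O`. -/
def rhoA {ιA ιB : Type*} [Fintype ιA] [Fintype ιB]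
    (O : Matrix (ιA × ιB) (ιA × ιB) ℂ) :
    Matrix (ιA × ιA) (ιA × ιA) ℂ :=
  fun p q =>
    (1 / (Fintype.card ιA * Fintype.card ιB : ℂ)) *
      ∑ b : ιB, ∑ b' : ιB, O (p.1, b) (p.2, b') * star (O (q.1, b) (q.2, b'))

/-- Identification of `N = N_A + N_B` qubits with the pair of subsystems. -/
def qubitEquiv (NA NB : ℕ) :
    (Fin (NA + NB) → Fin 2) ≃ (Fin NA → Fin 2) × (Fin NB → Fin 2) :=
  (Equiv.arrowCongr finSumFinEquiv.symm (Equiv.refl (Fin 2))).trans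
    (Equiv.sumArrowEquivProdArrow _ _ _)

/-- Reduced Choi state of an `N = N_A + N_B` qubit operator, subsystem A
being the first `N_A` qubits. -/
def rhoAq (NA NB : ℕ)
    (O : Matrix (Fin (NA + NB) → Fin 2) (Fin (NA + NB) → Fin 2) ℂ) :
    Matrix ((Fin NA → Fin 2) × (Fin NA → Fin 2))
      ((Fin NA → Fin 2) × (Fin NA → Fin 2)) ℂ :=
  rhoA (Matrix.reindex (qubitEquiv NA NB) (qubitEquiv NA NB) O)

/-- `n`-fold replica (tensor power) of a matrix. -/
def replica {ι : Type*} (n : ℕ) (O : Matrix ι ι ℂ) :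
    Matrix (Fin n → ι) (Fin n → ι) ℂ :=
  fun f g => ∏ a, O (f a) (g a)

/-- Replica permutation operator. -/
def Tperm {ι : Type*} [DecidableEq ι] {n : ℕ} (π : Equiv.Perm (Fin n)) :
    Matrix (Fin n → ι) (Fin n → ι) ℂ :=
  fun f g => if f = g ∘ π then 1 else 0

/-- Number of cycles of a permutation, counting fixed points as 1-cycles. -/
def numCycles {n : ℕ} (π : Equiv.Perm (Fin n)) : ℕ :=
  Multiset.card π.cycleType + (Finset.univ.filter fun x => π x = x).card

/-- `δ(π) = 0` if `π` has no fixed points and all cycles of even length,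
else `δ(π) = 1`. -/
def deltaOdd {n : ℕ} (π : Equiv.Perm (Fin n)) : ℕ :=
  if (∀ x, π x ≠ x) ∧ (∀ c ∈ π.cycleType, Even c) then 0 else 1

/-- Projector onto four-fold replicated Pauli strings. -/
def LambdaPlus (N : ℕ) :
    Matrix (Fin 4 → (Fin N → Fin 2)) (Fin 4 → (Fin N → Fin 2)) ℂ :=
  (1 / (4 ^ N : ℂ)) • ∑ a : Fin N → Fin 4, replica 4 (PauliString a)

def permA : Equiv.Perm (Fin 4) := Equiv.swap 0 1 * Equiv.swap 2 3
def permB : Equiv.Perm (Fin 4) := Equiv.swap 0 3 * Equiv.swap 1 2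

/-- The purity contraction permutation operator `T'` on four replicas of a
bipartite system. -/
def Tprime {ιA ιB : Type*} [DecidableEq ιA] [DecidableEq ιB] :
    Matrix (Fin 4 → ιA × ιB) (Fin 4 → ιA × ιB) ℂ :=
  fun f g =>
    if (∀ a, (f a).1 = (g (permA a)).1 ∧ (f a).2 = (g (permB a)).2) then 1 else 0

/-- The unitary stabilizer group of `U` (as a finite set of pairs of Pauli
labels). -/
def Stab {N : ℕ} (U : Matrix (Fin N → Fin 2) (Fin N → Fin 2) ℂ) :
    Finset ((Fin N → Fin 4) × (Fin N → Fin 4)) :=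
  Finset.univ.filter fun p =>
    Matrix.trace (PauliString p.1 * Uᴴ * PauliString p.2 * U) / (2 ^ N : ℂ)
      ∈ ({1, -1} : Set ℂ)


-- AUX SECTION (to be inserted before the theorem)
section LemmaOneAux

def S (π : Equiv.Perm (Fin 4)) (A : Matrix (Fin 2) (Fin 2) ℂ) : ℂ :=
  ∑ φ : Fin 4 → Fin 2, ∏ r, A (φ r) (φ (π r))
def cInv (π : Equiv.Perm (Fin 4)) : ℕ :=
  (Finset.univ.filter fun φ : Fin 4 → Fin 2 => ∀ r, φ r = φ (π r)).card
def cAlt (π : Equiv.Perm (Fin 4)) : ℕ :=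
  (Finset.univ.filter fun φ : Fin 4 → Fin 2 => ∀ r, ¬ (φ r = φ (π r))).card
def cEI (π : Equiv.Perm (Fin 4)) : ℕ :=
  (Finset.univ.filter fun φ : Fin 4 → Fin 2 =>
    (∀ r, φ r = φ (π r)) ∧ Even (∑ r, (φ r : ℕ))).card
def cEA (π : Equiv.Perm (Fin 4)) : ℕ :=
  (Finset.univ.filter fun φ : Fin 4 → Fin 2 =>
    (∀ r, ¬ (φ r = φ (π r))) ∧ Even (∑ r, (φ r : ℕ))).card

lemma D1 : ∀ π : Equiv.Perm (Fin 4), cInv π = 2 ^ numCycles π := by decide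
lemma D2 : ∀ π : Equiv.Perm (Fin 4), cAlt π = (1 - deltaOdd π) * 2 ^ numCycles π := by decide
lemma D3 : ∀ π : Equiv.Perm (Fin 4),
    2 * cEI π = cInv π + (1 - deltaOdd π) * 2 ^ numCycles π := by decide
lemma D4 : ∀ π : Equiv.Perm (Fin 4),
    2 * cEA π = cAlt π + (1 - deltaOdd π) * 2 ^ numCycles π := by decide
lemma D5 : ∀ π : Equiv.Perm (Fin 4), deltaOdd π = 1 → 2 ≤ numCycles π := by decide

lemma delta_cases (π : Equiv.Perm (Fin 4)) : deltaOdd π = 0 ∨ deltaOdd π = 1 := by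
  unfold deltaOdd; split <;> simp

lemma hP1 : ∀ x y : Fin 2, pauli 1 x y = if x = y then 0 else 1 := by
  intro x y; fin_cases x <;> fin_cases y <;>
    simp [pauli, Matrix.vecHead, Matrix.vecTail]
lemma hP2 : ∀ x y : Fin 2, pauli 2 x y =
    (if x = y then 0 else 1) * (Complex.I * (-1 : ℂ) ^ (y : ℕ)) := by
  intro x y; fin_cases x <;> fin_cases y <;>
    simp [pauli, Matrix.vecHead, Matrix.vecTail]
lemma hP3 : ∀ x y : Fin 2, pauli 3 x y = (if x = y then 1 else 0) * (-1 : ℂ) ^ (x : ℕ) := by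
  intro x y; fin_cases x <;> fin_cases y <;>
    simp [pauli, Matrix.vecHead, Matrix.vecTail]

lemma prod_ind (p : Fin 4 → Prop) [DecidablePred p] :
    (∏ r, if p r then (1:ℂ) else 0) = if (∀ r, p r) then 1 else 0 := by
  by_cases h : ∀ r, p r
  · rw [if_pos h]; exact Finset.prod_eq_one fun r _ => if_pos (h r)
  · rw [if_neg h]
    obtain ⟨r, hr⟩ := not_forall.mp h
    exact Finset.prod_eq_zero (Finset.mem_univ r) (if_neg hr)

lemma sum_ind_eq_card (p : (Fin 4 → Fin 2) → Prop) [DecidablePred p] :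
    (∑ φ : Fin 4 → Fin 2, if p φ then (1:ℂ) else 0) =
      ((Finset.univ.filter p).card : ℕ) := by
  rw [Finset.card_filter, Nat.cast_sum]
  refine Finset.sum_congr rfl fun φ _ => ?_
  by_cases h : p φ
  · rw [if_pos h, if_pos h, Nat.cast_one]
  · rw [if_neg h, if_neg h, Nat.cast_zero]

lemma S0 (π : Equiv.Perm (Fin 4)) : S π (pauli 0) = (cInv π : ℂ) := by
  have e : ∀ φ : Fin 4 → Fin 2, (∏ r, pauli 0 (φ r) (φ (π r))) =
      if (∀ r, φ r = φ (π r)) then (1:ℂ) else 0 := by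
    intro φ
    have h1 : ∀ x y : Fin 2, pauli 0 x y = if x = y then (1:ℂ) else 0 := fun x y =>
      Matrix.one_apply
    simp only [h1]
    exact prod_ind (fun r => φ r = φ (π r))
  rw [S]
  rw [Finset.sum_congr rfl fun φ _ => e φ, sum_ind_eq_card]
  rfl

lemma SX (π : Equiv.Perm (Fin 4)) : S π (pauli 1) = (cAlt π : ℂ) := by
  have e : ∀ φ : Fin 4 → Fin 2, (∏ r, pauli 1 (φ r) (φ (π r))) =
      if (∀ r, ¬ (φ r = φ (π r))) then (1:ℂ) else 0 := by
    intro φ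
    simp only [hP1, ← ite_not (_ = _)]
    exact prod_ind (fun r => ¬ (φ r = φ (π r)))
  rw [S]
  rw [Finset.sum_congr rfl fun φ _ => e φ, sum_ind_eq_card]
  rfl

lemma neg_one_sum (φ : Fin 4 → Fin 2) :
    ((-1 : ℂ) ^ (∑ r, (φ r : ℕ))) =
      (2 * (if Even (∑ r, (φ r : ℕ)) then (1:ℂ) else 0) - 1) := by
  by_cases h : Even (∑ r, (φ r : ℕ))
  · rw [if_pos h, h.neg_one_pow]; ring
  · rw [if_neg h, (Nat.not_even_iff_odd.mp h).neg_one_pow]; ring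

lemma ite_alg (P Q : Prop) [Decidable P] [Decidable Q] :
    (if P then (1:ℂ) else 0) * (2 * (if Q then (1:ℂ) else 0) - 1) =
      2 * (if P ∧ Q then (1:ℂ) else 0) - (if P then (1:ℂ) else 0) := by
  by_cases hP : P <;> by_cases hQ : Q <;>
    [rw [if_pos hP, if_pos hQ, if_pos ⟨hP, hQ⟩];
     rw [if_pos hP, if_neg hQ, if_neg (fun h => hQ h.2)];
     rw [if_neg hP, if_pos hQ, if_neg (fun h => hP h.1)];
     rw [if_neg hP, if_neg hQ, if_neg (fun h => hP h.1)]] <;> ring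

lemma SZ (π : Equiv.Perm (Fin 4)) :
    S π (pauli 3) = 2 * (cEI π : ℂ) - (cInv π : ℂ) := by
  have e : ∀ φ : Fin 4 → Fin 2, (∏ r, pauli 3 (φ r) (φ (π r))) =
      2 * (if ((∀ r, φ r = φ (π r)) ∧ Even (∑ r, (φ r : ℕ))) then (1:ℂ) else 0)
        - (if (∀ r, φ r = φ (π r)) then (1:ℂ) else 0) := by
    intro φ
    simp only [hP3]
    rw [Finset.prod_mul_distrib, Finset.prod_pow_eq_pow_sum,
      prod_ind (fun r => φ r = φ (π r)), neg_one_sum, ite_alg]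
  rw [S]
  rw [Finset.sum_congr rfl fun φ _ => e φ, Finset.sum_sub_distrib, ← Finset.mul_sum,
    sum_ind_eq_card, sum_ind_eq_card]
  rfl

lemma SY (π : Equiv.Perm (Fin 4)) :
    S π (pauli 2) = 2 * (cEA π : ℂ) - (cAlt π : ℂ) := by
  have e : ∀ φ : Fin 4 → Fin 2, (∏ r, pauli 2 (φ r) (φ (π r))) =
      2 * (if ((∀ r, ¬ (φ r = φ (π r))) ∧ Even (∑ r, (φ r : ℕ))) then (1:ℂ) else 0)
        - (if (∀ r, ¬ (φ r = φ (π r))) then (1:ℂ) else 0) := by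
    intro φ
    simp only [hP2, ← ite_not (_ = _)]
    rw [Finset.prod_mul_distrib, Finset.prod_mul_distrib, Finset.prod_const,
      Finset.prod_pow_eq_pow_sum,
      prod_ind (fun r => ¬ (φ r = φ (π r))),
      Equiv.sum_comp π (fun r => ((φ r : ℕ))),
      show (Complex.I) ^ (Finset.univ : Finset (Fin 4)).card = 1 by
        norm_num [pow_succ, Complex.I_mul_I],
      neg_one_sum, one_mul, ite_alg]
  rw [S]
  rw [Finset.sum_congr rfl fun φ _ => e φ, Finset.sum_sub_distrib, ← Finset.mul_sum,
    sum_ind_eq_card, sum_ind_eq_card]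
  rfl

def strMat {N : ℕ} (M : Fin N → Matrix (Fin 2) (Fin 2) ℂ) :
    Matrix (Fin N → Fin 2) (Fin N → Fin 2) ℂ :=
  fun f g => ∏ k, M k (f k) (g k)

lemma PauliString_eq {N : ℕ} (a : Fin N → Fin 4) :
    PauliString a = strMat (fun k => pauli (a k)) := rfl

lemma strMat_mul {N : ℕ} (M M' : Fin N → Matrix (Fin 2) (Fin 2) ℂ) :
    strMat M * strMat M' = strMat (fun k => M k * M' k) := by
  ext f g
  simp only [strMat, Matrix.mul_apply, ← Finset.prod_mul_distrib]
  rw [Finset.prod_univ_sum]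
  simp [Fintype.piFinset_univ]

lemma replica_mul {ι : Type*} [Fintype ι] [DecidableEq ι] (n : ℕ) (A B : Matrix ι ι ℂ) :
    replica n A * replica n B = replica n (A * B) := by
  ext f g
  simp only [replica, Matrix.mul_apply, ← Finset.prod_mul_distrib]
  rw [Finset.prod_univ_sum]
  simp [Fintype.piFinset_univ]

lemma trace_mul_Tperm {ι : Type*} [Fintype ι] [DecidableEq ι] {n : ℕ}
    (M : Matrix (Fin n → ι) (Fin n → ι) ℂ) (π : Equiv.Perm (Fin n)) :
    Matrix.trace (M * Tperm π) = ∑ f, M f (f ∘ π) := by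
  simp [Matrix.trace, Matrix.mul_apply, Tperm, Matrix.diag]

lemma trace_replica_strMat_Tperm {N : ℕ} (M : Fin N → Matrix (Fin 2) (Fin 2) ℂ)
    (π : Equiv.Perm (Fin 4)) :
    Matrix.trace (replica 4 (strMat M) * Tperm π) = ∏ k, S π (M k) := by
  rw [trace_mul_Tperm]
  simp only [replica, strMat, Function.comp]
  have h1 : ∀ f : Fin 4 → Fin N → Fin 2,
      (∏ r : Fin 4, ∏ k : Fin N, M k (f r k) (f (π r) k)) =
      (∏ k : Fin N, ∏ r : Fin 4, M k (f r k) (f (π r) k)) := fun f => Finset.prod_comm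
  simp only [h1]
  rw [← Fintype.sum_equiv (Equiv.piComm fun (_ : Fin N) (_ : Fin 4) => Fin 2)
    (fun g : Fin N → Fin 4 → Fin 2 => ∏ k, ∏ r, M k (g k r) (g k (π r)))
    (fun f : Fin 4 → Fin N → Fin 2 => ∏ k, ∏ r, M k (f r k) (f (π r) k))
    (fun g => rfl)]
  simp only [S]
  rw [Finset.prod_univ_sum]
  simp [Fintype.piFinset_univ]

lemma S_smul (π : Equiv.Perm (Fin 4)) (c : ℂ) (A : Matrix (Fin 2) (Fin 2) ℂ) :
    S π (c • A) = c ^ 4 * S π A := by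
  simp only [S, Matrix.smul_apply, smul_eq_mul, Finset.prod_mul_distrib,
    Finset.prod_const, Finset.card_univ, Fintype.card_fin, Finset.mul_sum]

def pm : Fin 4 → Fin 4 → Fin 4 :=
  ![![0,1,2,3], ![1,0,3,2], ![2,3,0,1], ![3,2,1,0]]
def ph : Fin 4 → Fin 4 → ℂ :=
  ![![1,1,1,1], ![1,1,Complex.I,-Complex.I], ![1,-Complex.I,1,Complex.I],
    ![1,Complex.I,-Complex.I,1]]

lemma pm_bij : ∀ β : Fin 4, Function.Bijective (pm β) := by decide

lemma ph_pow4 : ∀ β α : Fin 4, ph β α ^ 4 = 1 := by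
  intro β α
  fin_cases β <;> fin_cases α <;>
    norm_num [ph, Matrix.vecHead, Matrix.vecTail, pow_succ, Complex.I_mul_I]

lemma pauli_mul (β α : Fin 4) : pauli β * pauli α = ph β α • pauli (pm β α) := by
  fin_cases β <;> fin_cases α <;>
    ext i j <;> fin_cases i <;> fin_cases j <;>
    simp [pauli, pm, ph, Matrix.mul_apply, Fin.sum_univ_two, Matrix.one_apply,
      Matrix.vecHead, Matrix.vecTail]

lemma S_pauli_mul (π : Equiv.Perm (Fin 4)) (β α : Fin 4) :
    S π (pauli β * pauli α) = S π (pauli (pm β α)) := by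
  rw [pauli_mul, S_smul, ph_pow4, one_mul]

lemma sum_prod_swap {N : ℕ} (g : Fin N → Fin 4 → ℂ) :
    (∑ a : Fin N → Fin 4, ∏ k, g k (a k)) = ∏ k, ∑ α, g k α := by
  rw [Finset.prod_univ_sum]
  simp [Fintype.piFinset_univ]

lemma Sval0 (π : Equiv.Perm (Fin 4)) :
    S π (pauli 0) = ((2 ^ numCycles π : ℕ) : ℂ) := by rw [S0, D1 π]

lemma Svalne (π : Equiv.Perm (Fin 4)) :
    ∀ α : Fin 4, α ≠ 0 →
      S π (pauli α) = (((1 - deltaOdd π) * 2 ^ numCycles π : ℕ) : ℂ) := by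
  intro α hα
  fin_cases α
  · exact absurd rfl hα
  · rw [show (⟨1, by norm_num⟩ : Fin 4) = 1 from rfl, SX, D2 π]
  · rw [show (⟨2, by norm_num⟩ : Fin 4) = 2 from rfl, SY]
    have h := congrArg (fun m : ℕ => (m : ℂ)) (D4 π)
    push_cast at h ⊢
    linear_combination h
  · rw [show (⟨3, by norm_num⟩ : Fin 4) = 3 from rfl, SZ]
    have h := congrArg (fun m : ℕ => (m : ℂ)) (D3 π)
    push_cast at h ⊢
    linear_combination h

lemma S_total (π : Equiv.Perm (Fin 4)) :
    (∑ α, S π (pauli α)) =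
      ((2 ^ numCycles π + 3 * ((1 - deltaOdd π) * 2 ^ numCycles π) : ℕ) : ℂ) := by
  rw [Fin.sum_univ_four, Sval0, Svalne π 1 (by decide), Svalne π 2 (by decide),
    Svalne π 3 (by decide)]
  push_cast
  ring

end LemmaOneAux


/-- Lemma 1: traces of four-fold replicated non-identity Pauli
strings against `Λ±` and replica permutation operators. -/
theorem lemma_one (N : ℕ) (hN : 1 ≤ N) (a₀ : Fin N → Fin 4)
    (h₀ : ∃ k, a₀ k ≠ 0) (π : Equiv.Perm (Fin 4)) :
    Matrix.trace (LambdaPlus N * Tperm π) =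
        (2 ^ N : ℂ) ^ (numCycles π - 2 * deltaOdd π) ∧
    Matrix.trace (replica 4 (PauliString a₀) * LambdaPlus N * Tperm π) =
        (2 ^ N : ℂ) ^ (numCycles π - 2 * deltaOdd π) ∧
    Matrix.trace (replica 4 (PauliString a₀) * (1 - LambdaPlus N) * Tperm π) =
        -(deltaOdd π : ℂ) * (2 ^ N : ℂ) ^ (numCycles π - 2)    := by
  have hδ01 := delta_cases π
  have hpow4 : (4:ℂ) ^ N ≠ 0 := pow_ne_zero _ (by norm_num)
  have key1 : Matrix.trace (LambdaPlus N * Tperm π) =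
      (1 / (4:ℂ)^N) * (∑ α, S π (pauli α)) ^ N := by
    rw [LambdaPlus, Matrix.smul_mul, Matrix.sum_mul, Matrix.trace_smul, Matrix.trace_sum]
    simp only [PauliString_eq, trace_replica_strMat_Tperm]
    rw [sum_prod_swap (fun _ α => S π (pauli α)), Finset.prod_const, Finset.card_univ,
      Fintype.card_fin, smul_eq_mul]
  have key2 : Matrix.trace (replica 4 (PauliString a₀) * LambdaPlus N * Tperm π) =
      (1 / (4:ℂ)^N) * (∑ α, S π (pauli α)) ^ N := by
    rw [LambdaPlus, Matrix.mul_smul, Matrix.mul_sum, Matrix.smul_mul, Matrix.sum_mul,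
      Matrix.trace_smul, Matrix.trace_sum]
    simp only [PauliString_eq, replica_mul, strMat_mul, trace_replica_strMat_Tperm,
      S_pauli_mul]
    rw [sum_prod_swap (fun k α => S π (pauli (pm (a₀ k) α)))]
    have hswap : ∀ k : Fin N, (∑ α, S π (pauli (pm (a₀ k) α))) = ∑ γ, S π (pauli γ) :=
      fun k => Fintype.sum_bijective (pm (a₀ k)) (pm_bij _) _ _ (fun α => rfl)
    rw [Finset.prod_congr rfl fun k _ => hswap k, Finset.prod_const, Finset.card_univ,
      Fintype.card_fin, smul_eq_mul]
  have key3 : Matrix.trace (replica 4 (PauliString a₀) * Tperm π) =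
      ∏ k, S π (pauli (a₀ k)) := by
    rw [PauliString_eq, trace_replica_strMat_Tperm]
  have hval : (1 / (4:ℂ)^N) * (∑ α, S π (pauli α)) ^ N =
      ((2:ℂ) ^ N) ^ (numCycles π - 2 * deltaOdd π) := by
    rw [S_total]
    rcases hδ01 with h | h
    · simp only [h, Nat.sub_zero, one_mul, Nat.mul_zero]
      rw [show (2 ^ numCycles π + 3 * 2 ^ numCycles π : ℕ) = 4 * 2 ^ numCycles π by ring]
      push_cast
      calc (1 / (4:ℂ)^N) * ((4:ℂ) * 2 ^ numCycles π) ^ N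
          = (1 / (4:ℂ)^N) * ((4:ℂ)^N * ((2:ℂ) ^ numCycles π) ^ N) := by rw [mul_pow]
        _ = ((2:ℂ) ^ numCycles π) ^ N := by
            rw [← mul_assoc, one_div_mul_cancel hpow4, one_mul]
        _ = ((2:ℂ) ^ N) ^ numCycles π := pow_right_comm 2 (numCycles π) N
    · have hn := D5 π h
      simp only [h, Nat.sub_self, zero_mul, mul_zero, add_zero, mul_one]
      push_cast
      have h2 : 2 * N + N * (numCycles π - 2) = numCycles π * N := by
        rw [mul_comm 2 N, ← Nat.mul_add, Nat.add_sub_cancel' hn, mul_comm]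
      have e2 : ((2:ℂ) ^ numCycles π) ^ N =
          (4:ℂ)^N * ((2:ℂ) ^ N) ^ (numCycles π - 2) := by
        rw [show (4:ℂ) = 2^2 by norm_num, ← pow_mul, ← pow_mul, ← pow_mul, ← pow_add, h2]
      rw [e2, ← mul_assoc, one_div_mul_cancel hpow4, one_mul]
  refine ⟨key1.trans hval, key2.trans hval, ?_⟩
  have expand : replica 4 (PauliString a₀) * (1 - LambdaPlus N) * Tperm π
      = replica 4 (PauliString a₀) * Tperm π
        - replica 4 (PauliString a₀) * LambdaPlus N * Tperm π := by
    rw [Matrix.mul_sub, Matrix.mul_one, Matrix.sub_mul]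
  rw [expand, Matrix.trace_sub, key3, key2, hval]
  rcases hδ01 with h | h
  · have hall : ∀ k : Fin N, S π (pauli (a₀ k)) = ((2 ^ numCycles π : ℕ) : ℂ) := by
      intro k
      by_cases hk : a₀ k = 0
      · rw [hk, Sval0]
      · rw [Svalne π _ hk, h, Nat.sub_zero, one_mul]
    rw [Finset.prod_congr rfl fun k _ => hall k, Finset.prod_const, Finset.card_univ,
      Fintype.card_fin, h]
    push_cast
    rw [pow_right_comm]
    simp
  · obtain ⟨k0, hk0⟩ := h₀
    have hzero : S π (pauli (a₀ k0)) = 0 := by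
      rw [Svalne π _ hk0, h, Nat.sub_self, zero_mul, Nat.cast_zero]
    rw [Finset.prod_eq_zero (Finset.mem_univ k0) hzero, h]
    norm_num


end
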